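/- (Quantitative implicit/inverse function theorem for zeros) Let F = f + g be a C¹ map on the closed complex polydisk/ball D_R(0) ⊂ ℂⁿ with values in ℂⁿ, where (i) f is a diffeomorphism of D_R(0) with f(0)=0 and everywhere invertible Jacobian ∂f; (ii) sup_{D_R(0)} ‖∂g‖ · sup_{D_R(0)} ‖(∂f)^{−1}‖ ≤ 1/2; (iii) (sup_{D_R(0)} |g| · sup_{D_R(0)} ‖(∂f)^{−1}‖)/r ≤ 1/2 for some 0 < r ≤ R. Then there exists a unique z₀ in the ball B_r(0) with F(z₀) = 0. -/

import Mathlib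

open Metric Set

lemma aux_continuation {E : Type*} [NormedAddCommGroup E] [NormedSpace ℝ E] [ProperSpace E]
    {f : E → E} {ρ δ N' : ℝ} (hδ : 0 < δ) (hN' : 0 < N')
    (hc : ContinuousOn f (closedBall 0 ρ))
    (hf0 : f 0 = 0)
    (H : ∀ z ∈ closedBall (0:E) ρ, ∀ w : E, N' * ‖w - f z‖ ≤ δ →
      ∃ z', ‖z' - z‖ ≤ N' * ‖w - f z‖ ∧ f z' = w)
    {w : E} (hw : N' * ‖w‖ ≤ ρ) : ∃ z, ‖z‖ ≤ N' * ‖w‖ ∧ f z = w := by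
  rcases eq_or_ne w 0 with rfl | hw0
  · exact ⟨0, by simp, by simpa using hf0⟩
  have hwpos : 0 < ‖w‖ := norm_pos_iff.mpr hw0
  set s : Set ℝ := {t | ∃ z : E, ‖z‖ ≤ N' * (t * ‖w‖) ∧ f z = t • w} with hs
  have hball : ∀ t ∈ Icc (0:ℝ) 1, ∀ z : E, ‖z‖ ≤ N' * (t * ‖w‖) → z ∈ closedBall (0:E) ρ := by
    intro t ht z hz
    rw [mem_closedBall_zero_iff]
    refine hz.trans (le_trans ?_ hw)
    have h1 : t * ‖w‖ ≤ ‖w‖ := by nlinarith [ht.2, hwpos.le, ht.1]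
    nlinarith
  have h0s : (0:ℝ) ∈ s := ⟨0, by simp, by simpa using hf0⟩
  have hclosed : IsClosed (s ∩ Icc (0:ℝ) 1) := by
    apply IsSeqClosed.isClosed
    intro tn t htn hlim
    have htIcc : t ∈ Icc (0:ℝ) 1 :=
      isClosed_Icc.mem_of_tendsto hlim (.of_forall fun n => (htn n).2)
    choose z hz1 hz2 using fun n => (htn n).1
    have hzball : ∀ n, z n ∈ closedBall (0:E) ρ := fun n => hball _ (htn n).2 _ (hz1 n)
    obtain ⟨zl, hzlmem, φ, hφ, hφlim⟩ :=
      (isCompact_closedBall (0:E) ρ).tendsto_subseq hzball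
    have htφ : Filter.Tendsto (fun k => tn (φ k)) Filter.atTop (nhds t) :=
      hlim.comp hφ.tendsto_atTop
    refine ⟨⟨zl, ?_, ?_⟩, htIcc⟩
    · have h1 : Filter.Tendsto (fun k => ‖z (φ k)‖) Filter.atTop (nhds ‖zl‖) := hφlim.norm
      have h2 : Filter.Tendsto (fun k => N' * (tn (φ k) * ‖w‖)) Filter.atTop
          (nhds (N' * (t * ‖w‖))) := ((htφ.mul_const ‖w‖).const_mul N')
      exact le_of_tendsto_of_tendsto' h1 h2 fun k => hz1 (φ k)
    · have hfz : Filter.Tendsto (fun k => f (z (φ k))) Filter.atTop (nhds (f zl)) := by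
        refine Filter.Tendsto.comp (hc zl hzlmem) ?_
        exact tendsto_nhdsWithin_of_tendsto_nhds_of_eventually_within _ hφlim
          (.of_forall fun k => hzball (φ k))
      have hfz' : Filter.Tendsto (fun k => tn (φ k) • w) Filter.atTop (nhds (t • w)) :=
        htφ.smul_const w
      have heq : (fun k => f (z (φ k))) = fun k => tn (φ k) • w := funext fun k => hz2 (φ k)
      rw [heq] at hfz
      exact tendsto_nhds_unique hfz hfz'
  have hgt : ∀ x ∈ s ∩ Ico (0:ℝ) 1, ∀ y ∈ Ioi x, (s ∩ Ioc x y).Nonempty := by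
    intro x hx y hy
    obtain ⟨z, hz1, hz2⟩ := hx.1
    have hzball : z ∈ closedBall (0:E) ρ := hball x ⟨hx.2.1, hx.2.2.le⟩ z hz1
    set t' : ℝ := min y (min 1 (x + δ / (N' * ‖w‖))) with ht'
    have hpos : 0 < δ / (N' * ‖w‖) := by positivity
    have ht'x : x < t' := lt_min hy (lt_min hx.2.2 (by linarith))
    have ht'1 : t' ≤ 1 := le_trans (min_le_right _ _) (min_le_left _ _)
    have ht'y : t' ≤ y := min_le_left _ _
    have hkey : N' * ‖t' • w - f z‖ = N' * ((t' - x) * ‖w‖) := by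
      rw [hz2, ← sub_smul, norm_smul, Real.norm_eq_abs,
        abs_of_pos (by linarith : (0:ℝ) < t' - x)]
    have hdist : N' * ‖t' • w - f z‖ ≤ δ := by
      rw [hkey]
      have h2 : t' ≤ x + δ / (N' * ‖w‖) := le_trans (min_le_right _ _) (min_le_right _ _)
      have h3 : N' * ((t' - x) * ‖w‖) ≤ N' * ((δ / (N' * ‖w‖)) * ‖w‖) := by
        apply mul_le_mul_of_nonneg_left _ hN'.le
        apply mul_le_mul_of_nonneg_right _ hwpos.le
        linarith
      refine h3.trans (le_of_eq ?_)
      field_simp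
    obtain ⟨z', hz'1, hz'2⟩ := H z hzball (t' • w) hdist
    refine ⟨t', ⟨z', ?_, hz'2⟩, ht'x, ht'y⟩
    calc ‖z'‖ ≤ ‖z‖ + ‖z' - z‖ := by
          simpa using norm_add_le z (z' - z)
      _ ≤ N' * (x * ‖w‖) + N' * ‖t' • w - f z‖ := add_le_add hz1 hz'1
      _ = N' * (t' * ‖w‖) := by rw [hkey]; ring
  have h1s : (1:ℝ) ∈ s :=
    IsClosed.Icc_subset_of_forall_exists_gt hclosed h0s hgt (right_mem_Icc.mpr zero_le_one)
  obtain ⟨z, hz1, hz2⟩ := h1s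
  exact ⟨z, by simpa using hz1, by simpa using hz2⟩

lemma aux_global_lip {E : Type*} [NormedAddCommGroup E] [NormedSpace ℝ E] (Φ : E → E)
    (D : Set E) (hD : Convex ℝ D) (cL η : ℝ) (hη : 0 < η)
    (h : ∀ x ∈ D, ∀ y ∈ D, ‖x - y‖ ≤ η → ‖Φ x - Φ y‖ ≤ cL * ‖x - y‖) :
    ∀ x ∈ D, ∀ y ∈ D, ‖Φ x - Φ y‖ ≤ cL * ‖x - y‖ := by
  intro x hx y hy
  obtain ⟨m, hm⟩ := exists_nat_ge (‖y - x‖ / η)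
  set M : ℕ := m + 1 with hM
  have hMpos : (0:ℝ) < M := by positivity
  have hkey : ‖y - x‖ / M ≤ η := by
    rw [div_le_iff₀ hMpos]
    have h1 : ‖y - x‖ / η ≤ M := by
      push_cast [hM]; linarith
    rw [div_le_iff₀ hη] at h1
    linarith [h1]
  set p : ℕ → E := fun k => x + ((k:ℝ)/M) • (y - x) with hp
  have hpD : ∀ k ≤ M, p k ∈ D := by
    intro k hk
    have ht0 : (0:ℝ) ≤ (k:ℝ)/M := by positivity
    have ht1 : (k:ℝ)/M ≤ 1 := by
      rw [div_le_one hMpos]; exact_mod_cast hk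
    have heq : p k = (1 - (k:ℝ)/M) • x + ((k:ℝ)/M) • y := by
      simp only [hp, smul_sub, sub_smul, one_smul]; abel
    rw [heq]
    exact hD hx hy (by linarith) ht0 (by ring)
  have hstep : ∀ k : ℕ, p (k+1) - p k = ((1:ℝ)/M) • (y - x) := by
    intro k
    simp only [hp]
    rw [add_sub_add_left_eq_sub, ← sub_smul]
    congr 1
    push_cast
    field_simp
    ring
  have hstepnorm : ∀ k : ℕ, ‖p (k+1) - p k‖ = ‖y - x‖ / M := by
    intro k
    rw [hstep k, norm_smul, Real.norm_eq_abs, abs_of_pos (by positivity : (0:ℝ) < 1/M)]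
    ring
  have hind : ∀ k ≤ M, ‖Φ (p k) - Φ x‖ ≤ cL * (k * (‖y - x‖ / M)) := by
    intro k
    induction k with
    | zero => intro _; simp [hp]
    | succ k ih =>
      intro hk
      have hk' : k ≤ M := Nat.le_of_succ_le hk
      have h1 : ‖Φ (p (k+1)) - Φ (p k)‖ ≤ cL * ‖p (k+1) - p k‖ := by
        apply h _ (hpD _ hk) _ (hpD _ hk')
        rw [hstepnorm k]; exact hkey
      calc ‖Φ (p (k+1)) - Φ x‖ ≤ ‖Φ (p (k+1)) - Φ (p k)‖ + ‖Φ (p k) - Φ x‖ := by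
            simpa using norm_add_le (Φ (p (k+1)) - Φ (p k)) (Φ (p k) - Φ x)
        _ ≤ cL * ‖p (k+1) - p k‖ + cL * (k * (‖y - x‖ / M)) := add_le_add h1 (ih hk')
        _ = cL * ((↑(k+1) : ℝ) * (‖y - x‖ / M)) := by rw [hstepnorm k]; push_cast; ring
  have hpM : p M = y := by
    simp only [hp]
    rw [div_self hMpos.ne', one_smul]
    abel
  have := hind M le_rfl
  rw [hpM] at this
  have h2 : (M:ℝ) * (‖y - x‖ / M) = ‖y - x‖ := by field_simp
  rw [h2] at this
  rw [norm_sub_rev (Φ x), norm_sub_rev x]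
  exact this

set_option maxHeartbeats 2000000 in
theorem stmt_8 {n : ℕ} (f g : EuclideanSpace ℂ (Fin n) → EuclideanSpace ℂ (Fin n))
    (R r N : ℝ) (hR : 0 < R) (hr : 0 < r) (hrR : r ≤ R) (hN : 0 ≤ N)
    (hf1 : ContDiffOn ℂ 1 f (closedBall 0 R))
    (hg1 : ContDiffOn ℂ 1 g (closedBall 0 R))
    (hinj : Set.InjOn f (closedBall 0 R))
    (hf0 : f 0 = 0)
    (hJ : ∀ z ∈ closedBall (0 : EuclideanSpace ℂ (Fin n)) R,
      ∃ J : EuclideanSpace ℂ (Fin n) ≃L[ℂ] EuclideanSpace ℂ (Fin n),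
        (J : EuclideanSpace ℂ (Fin n) →L[ℂ] EuclideanSpace ℂ (Fin n)) = fderiv ℂ f z ∧
        ‖(J.symm : EuclideanSpace ℂ (Fin n) →L[ℂ] EuclideanSpace ℂ (Fin n))‖ ≤ N)
    (hdg : ∀ z ∈ closedBall (0 : EuclideanSpace ℂ (Fin n)) R, ‖fderiv ℂ g z‖ * N ≤ 1 / 2)
    (hgs : ∀ z ∈ closedBall (0 : EuclideanSpace ℂ (Fin n)) R, ‖g z‖ * N ≤ r / 2) :
    ∃! z₀ : EuclideanSpace ℂ (Fin n), z₀ ∈ ball (0 : EuclideanSpace ℂ (Fin n)) r ∧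
      f z₀ + g z₀ = 0 := by
  classical
  rcases Nat.eq_zero_or_pos n with rfl | hn
  · have hsub : ∀ x y : EuclideanSpace ℂ (Fin 0), x = y := fun x y => by ext i; exact i.elim0
    exact ⟨0, ⟨mem_ball_self hr, hsub _ _⟩, fun y _ => hsub y 0⟩
  -- Setup
  obtain ⟨i⟩ : Nonempty (Fin n) := ⟨⟨0, hn⟩⟩
  set v : EuclideanSpace ℂ (Fin n) := EuclideanSpace.single i 1 with hv
  have hvnorm : ‖v‖ = 1 := by simp [hv]
  have hvne : v ≠ 0 := by
    intro h; rw [h, norm_zero] at hvnorm; norm_num at hvnorm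
  have hJsymm_ne : ∀ (J : EuclideanSpace ℂ (Fin n) ≃L[ℂ] EuclideanSpace ℂ (Fin n)),
      (J.symm : EuclideanSpace ℂ (Fin n) →L[ℂ] EuclideanSpace ℂ (Fin n)) ≠ 0 := by
    intro J h0
    have h1 : J.symm (J v) = v := J.symm_apply_apply v
    have h2 : (J.symm : EuclideanSpace ℂ (Fin n) →L[ℂ] EuclideanSpace ℂ (Fin n)) (J v) = 0 := by
      rw [h0]; rfl
    rw [show (J.symm : EuclideanSpace ℂ (Fin n) →L[ℂ] EuclideanSpace ℂ (Fin n)) (J v)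
      = J.symm (J v) from rfl] at h2
    exact hvne (h1 ▸ h2)
  have h0R : (0 : EuclideanSpace ℂ (Fin n)) ∈ closedBall (0 : EuclideanSpace ℂ (Fin n)) R :=
    mem_closedBall_self hR.le
  have hNpos : 0 < N := by
    obtain ⟨J, _, hJN⟩ := hJ 0 h0R
    exact lt_of_lt_of_le (norm_pos_iff.mpr (hJsymm_ne J)) hJN
  -- differentiability of f
  have hfd : ∀ z ∈ closedBall (0 : EuclideanSpace ℂ (Fin n)) R, DifferentiableAt ℂ f z := by
    intro z hz
    by_contra hnd
    obtain ⟨J, hJeq, _⟩ := hJ z hz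
    rw [fderiv_zero_of_not_differentiableAt hnd] at hJeq
    have hJv : J v = 0 := by
      have := congrArg (fun A : EuclideanSpace ℂ (Fin n) →L[ℂ] EuclideanSpace ℂ (Fin n) => A v) hJeq
      simpa using this
    have : v = 0 := by rw [← J.symm_apply_apply v, hJv, map_zero]
    exact hvne this
  -- constants
  have h6N : (0:ℝ) < 6 * N := by linarith
  set N' : ℝ := 6 * N / 5 with hN'def
  have hN'pos : 0 < N' := by rw [hN'def]; linarith
  set ρ : ℝ := 3 * r / 5 with hρdef
  have hρpos : 0 < ρ := by rw [hρdef]; linarith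
  have hρr : ρ < r := by rw [hρdef]; linarith
  set cnn : NNReal := ⟨1 / (6 * N), le_of_lt (one_div_pos.mpr h6N)⟩ with hcnndef
  have hcnncoe : (cnn : ℝ) = 1 / (6 * N) := rfl
  -- continuity of the derivative, uniform continuity
  have hball45 : closedBall (0 : EuclideanSpace ℂ (Fin n)) (4 * r / 5)
      ⊆ ball (0 : EuclideanSpace ℂ (Fin n)) R := by
    intro x hx
    rw [mem_closedBall_zero_iff] at hx
    rw [mem_ball_zero_iff]
    linarith
  have hcont : ContinuousOn (fderiv ℂ f) (closedBall (0 : EuclideanSpace ℂ (Fin n)) (4 * r / 5)) :=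
    ((hf1.mono ball_subset_closedBall).continuousOn_fderiv_of_isOpen isOpen_ball le_rfl).mono
      hball45
  obtain ⟨δ₁, hδ₁pos, hδ₁⟩ := Metric.uniformContinuousOn_iff.mp
    ((isCompact_closedBall _ _).uniformContinuousOn_of_continuous hcont) (1 / (6 * N))
    (one_div_pos.mpr h6N)
  set δ : ℝ := min (δ₁ / 2) (r / 5) with hδdef
  have hδpos : 0 < δ := lt_min (by linarith) (by linarith)
  have hδr5 : δ ≤ r / 5 := min_le_right _ _
  have hδhalf : δ ≤ δ₁ / 2 := min_le_left _ _
  -- the key local surjectivity statement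
  have Hloc : ∀ z ∈ closedBall (0 : EuclideanSpace ℂ (Fin n)) ρ,
      ∀ w : EuclideanSpace ℂ (Fin n), N' * ‖w - f z‖ ≤ δ →
      ∃ z', ‖z' - z‖ ≤ N' * ‖w - f z‖ ∧ f z' = w := by
    intro z hz w hwd
    rw [mem_closedBall_zero_iff] at hz
    set sR : ℝ := N' * ‖w - f z‖ with hsRdef
    have hsR0 : 0 ≤ sR := mul_nonneg hN'pos.le (norm_nonneg _)
    have hsRδ : sR ≤ δ := hwd
    have hz45 : z ∈ closedBall (0 : EuclideanSpace ℂ (Fin n)) (4 * r / 5) := by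
      rw [mem_closedBall_zero_iff]; rw [hρdef] at hz; linarith
    have hsub45 : closedBall z sR ⊆ closedBall (0 : EuclideanSpace ℂ (Fin n)) (4 * r / 5) := by
      intro x hx
      rw [mem_closedBall] at hx
      rw [mem_closedBall_zero_iff]
      have h1 : ‖x‖ ≤ ‖x - z‖ + ‖z‖ := by simpa using norm_add_le (x - z) z
      rw [dist_eq_norm] at hx
      rw [hρdef] at hz
      linarith
    have hsubR : closedBall z sR ⊆ closedBall (0 : EuclideanSpace ℂ (Fin n)) R :=
      fun x hx => ball_subset_closedBall (hball45 (hsub45 hx))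
    obtain ⟨J, hJeq, hJN⟩ := hJ z (hsubR (mem_closedBall_self hsR0))
    have happrox : ApproximatesLinearOn f
        (J : EuclideanSpace ℂ (Fin n) →L[ℂ] EuclideanSpace ℂ (Fin n)) (closedBall z sR) cnn := by
      intro x hx y hy
      have mvt := Convex.norm_image_sub_le_of_norm_hasFDerivWithin_le
        (f := fun u => f u - (J : EuclideanSpace ℂ (Fin n) →L[ℂ] EuclideanSpace ℂ (Fin n)) u)
        (f' := fun u => ((fderiv ℂ f u) -
          (J : EuclideanSpace ℂ (Fin n) →L[ℂ] EuclideanSpace ℂ (Fin n))).restrictScalars ℝ)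
        (s := closedBall z sR) (C := 1 / (6 * N)) ?_ ?_ (convex_closedBall _ _) hy hx
      · have heq : (f x - (J : EuclideanSpace ℂ (Fin n) →L[ℂ] EuclideanSpace ℂ (Fin n)) x)
            - (f y - (J : EuclideanSpace ℂ (Fin n) →L[ℂ] EuclideanSpace ℂ (Fin n)) y)
            = f x - f y - (J : EuclideanSpace ℂ (Fin n) →L[ℂ] EuclideanSpace ℂ (Fin n)) (x - y) := by
          rw [map_sub]; abel
        calc ‖f x - f y - (J : EuclideanSpace ℂ (Fin n) →L[ℂ] EuclideanSpace ℂ (Fin n)) (x - y)‖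
            = ‖(f x - (J : EuclideanSpace ℂ (Fin n) →L[ℂ] EuclideanSpace ℂ (Fin n)) x)
              - (f y - (J : EuclideanSpace ℂ (Fin n) →L[ℂ] EuclideanSpace ℂ (Fin n)) y)‖ := by
              rw [heq]
          _ ≤ 1 / (6 * N) * ‖x - y‖ := mvt
          _ = (cnn : ℝ) * ‖x - y‖ := by rw [hcnncoe]
      · intro u hu
        have huR : u ∈ closedBall (0 : EuclideanSpace ℂ (Fin n)) R := hsubR hu
        exact (((hfd u huR).hasFDerivAt.sub
          ((J : EuclideanSpace ℂ (Fin n) →L[ℂ] EuclideanSpace ℂ (Fin n)).hasFDerivAt)).restrictScalars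
          ℝ).hasFDerivWithinAt
      · intro u hu
        rw [ContinuousLinearMap.norm_restrictScalars, hJeq]
        have hu45 := hsub45 hu
        have hd : dist u z < δ₁ := by
          have : dist u z ≤ sR := mem_closedBall.mp hu
          linarith
        have := hδ₁ u hu45 z hz45 hd
        rw [dist_eq_norm] at this
        exact this.le
    have hsurj := happrox.surjOn_closedBall_of_nonlinearRightInverse J.toNonlinearRightInverse
      hsR0 (subset_refl _)
    have hJsympos : 0 < ‖(J.symm : EuclideanSpace ℂ (Fin n) →L[ℂ] EuclideanSpace ℂ (Fin n))‖ :=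
      norm_pos_iff.mpr (hJsymm_ne J)
    have hwmem : w ∈ closedBall (f z) (((J.toNonlinearRightInverse.nnnorm : ℝ)⁻¹ - (cnn : ℝ)) * sR) := by
      rw [mem_closedBall, dist_eq_norm]
      have hnn : (J.toNonlinearRightInverse.nnnorm : ℝ)
          = ‖(J.symm : EuclideanSpace ℂ (Fin n) →L[ℂ] EuclideanSpace ℂ (Fin n))‖ := rfl
      have h1 : (1:ℝ) / N ≤ (J.toNonlinearRightInverse.nnnorm : ℝ)⁻¹ := by
        rw [hnn, one_div]
        exact inv_anti₀ hJsympos hJN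
      have h2 : (1 / N - 1 / (6 * N)) * sR ≤ ((J.toNonlinearRightInverse.nnnorm : ℝ)⁻¹ - (cnn : ℝ)) * sR := by
        apply mul_le_mul_of_nonneg_right _ hsR0
        rw [hcnncoe]
        linarith
      refine le_trans (le_of_eq ?_) h2
      rw [hsRdef, hN'def]
      field_simp
      ring
    obtain ⟨z', hz'mem, hz'eq⟩ := hsurj hwmem
    exact ⟨z', by rw [← dist_eq_norm]; exact mem_closedBall.mp hz'mem, hz'eq⟩
  -- global solvability
  have hρR : ρ ≤ R := by linarith
  have hfc : ContinuousOn f (closedBall (0 : EuclideanSpace ℂ (Fin n)) ρ) :=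
    hf1.continuousOn.mono (closedBall_subset_closedBall hρR)
  have hEx : ∀ w : EuclideanSpace ℂ (Fin n), ‖w‖ ≤ r / (2 * N) →
      ∃ z, ‖z‖ ≤ N' * ‖w‖ ∧ f z = w := by
    intro w hw
    apply aux_continuation hδpos hN'pos hfc hf0 Hloc
    calc N' * ‖w‖ ≤ N' * (r / (2 * N)) :=
          mul_le_mul_of_nonneg_left hw hN'pos.le
      _ = ρ := by rw [hN'def, hρdef]; field_simp; ring
  choose Φ hΦ1 hΦ2 using hEx
  set Φ' : EuclideanSpace ℂ (Fin n) → EuclideanSpace ℂ (Fin n) :=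
    fun w => if h : ‖w‖ ≤ r / (2 * N) then Φ w h else 0 with hΦ'def
  have hΦ'1 : ∀ w, (h : ‖w‖ ≤ r / (2 * N)) → ‖Φ' w‖ ≤ N' * ‖w‖ := by
    intro w h; rw [hΦ'def]; simp only [dif_pos h]; exact hΦ1 w h
  have hΦ'2 : ∀ w, (h : ‖w‖ ≤ r / (2 * N)) → f (Φ' w) = w := by
    intro w h; rw [hΦ'def]; simp only [dif_pos h]; exact hΦ2 w h
  have hΦ'ρ : ∀ w, ‖w‖ ≤ r / (2 * N) → Φ' w ∈ closedBall (0 : EuclideanSpace ℂ (Fin n)) ρ := by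
    intro w h
    rw [mem_closedBall_zero_iff]
    calc ‖Φ' w‖ ≤ N' * ‖w‖ := hΦ'1 w h
      _ ≤ N' * (r / (2 * N)) := mul_le_mul_of_nonneg_left h hN'pos.le
      _ = ρ := by rw [hN'def, hρdef]; field_simp; ring
  -- local Lipschitz for Φ'
  have hlip_loc : ∀ w₁ ∈ closedBall (0 : EuclideanSpace ℂ (Fin n)) (r / (2 * N)),
      ∀ w₂ ∈ closedBall (0 : EuclideanSpace ℂ (Fin n)) (r / (2 * N)),
      ‖w₁ - w₂‖ ≤ δ / N' → ‖Φ' w₁ - Φ' w₂‖ ≤ N' * ‖w₁ - w₂‖ := by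
    intro w₁ h1 w₂ h2 hd
    rw [mem_closedBall_zero_iff] at h1 h2
    have hzmem := hΦ'ρ w₁ h1
    have hfw1 : f (Φ' w₁) = w₁ := hΦ'2 w₁ h1
    have hkey : ‖w₂ - f (Φ' w₁)‖ = ‖w₁ - w₂‖ := by rw [hfw1, norm_sub_rev]
    have hdist : N' * ‖w₂ - f (Φ' w₁)‖ ≤ δ := by
      rw [hkey]
      calc N' * ‖w₁ - w₂‖ ≤ N' * (δ / N') := mul_le_mul_of_nonneg_left hd hN'pos.le
        _ = δ := by field_simp
    obtain ⟨z', hz'1, hz'2⟩ := Hloc _ hzmem w₂ hdist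
    have hz'R : z' ∈ closedBall (0 : EuclideanSpace ℂ (Fin n)) R := by
      rw [mem_closedBall_zero_iff]
      have ha : ‖z'‖ ≤ ‖z' - Φ' w₁‖ + ‖Φ' w₁‖ := by simpa using norm_add_le (z' - Φ' w₁) (Φ' w₁)
      have hb : ‖Φ' w₁‖ ≤ ρ := mem_closedBall_zero_iff.mp hzmem
      have hc : ‖z' - Φ' w₁‖ ≤ δ := le_trans hz'1 hdist
      rw [hρdef] at hb
      linarith [hδr5]
    have hΦw₂R : Φ' w₂ ∈ closedBall (0 : EuclideanSpace ℂ (Fin n)) R :=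
      closedBall_subset_closedBall hρR (hΦ'ρ w₂ h2)
    have hz'eq : z' = Φ' w₂ := hinj hz'R hΦw₂R (by rw [hz'2, hΦ'2 w₂ h2])
    calc ‖Φ' w₁ - Φ' w₂‖ = ‖z' - Φ' w₁‖ := by rw [← hz'eq, norm_sub_rev]
      _ ≤ N' * ‖w₂ - f (Φ' w₁)‖ := hz'1
      _ = N' * ‖w₁ - w₂‖ := by rw [hkey]
  have hlip := aux_global_lip Φ' (closedBall (0 : EuclideanSpace ℂ (Fin n)) (r / (2 * N)))
    (convex_closedBall _ _) N' (δ / N') (div_pos hδpos hN'pos) hlip_loc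
  -- g bounds
  have hsubρR : closedBall (0 : EuclideanSpace ℂ (Fin n)) ρ
      ⊆ closedBall (0 : EuclideanSpace ℂ (Fin n)) R := closedBall_subset_closedBall hρR
  have hgbound : ∀ z ∈ closedBall (0 : EuclideanSpace ℂ (Fin n)) R, ‖g z‖ ≤ r / (2 * N) := by
    intro z hzz
    have h1 := hgs z hzz
    rw [le_div_iff₀ (by linarith : (0:ℝ) < 2 * N),
      show ‖g z‖ * (2 * N) = 2 * (‖g z‖ * N) by ring]
    linarith
  have hglip : ∀ x ∈ closedBall (0 : EuclideanSpace ℂ (Fin n)) ρ,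
      ∀ y ∈ closedBall (0 : EuclideanSpace ℂ (Fin n)) ρ,
      ‖g x - g y‖ ≤ (1 / (2 * N)) * ‖x - y‖ := by
    intro x hx y hy
    refine Convex.norm_image_sub_le_of_norm_hasFDerivWithin_le
      (f' := fun u => (fderiv ℂ g u).restrictScalars ℝ) ?_ ?_ (convex_closedBall _ _) hy hx
    · intro u hu
      have huR : u ∈ closedBall (0 : EuclideanSpace ℂ (Fin n)) R := hsubρR hu
      have hunb : closedBall (0 : EuclideanSpace ℂ (Fin n)) R ∈ nhds u := by
        refine Filter.mem_of_superset (isOpen_ball.mem_nhds ?_) ball_subset_closedBall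
        rw [mem_ball_zero_iff]
        have := mem_closedBall_zero_iff.mp hu
        rw [hρdef] at this
        linarith
      have hdiff : DifferentiableAt ℂ g u := ((hg1.differentiableOn one_ne_zero) u huR).differentiableAt hunb
      exact (hdiff.hasFDerivAt.restrictScalars ℝ).hasFDerivWithinAt
    · intro u hu
      rw [ContinuousLinearMap.norm_restrictScalars]
      have h1 := hdg u (hsubρR hu)
      rw [le_div_iff₀ (by linarith : (0:ℝ) < 2 * N),
        show ‖fderiv ℂ g u‖ * (2 * N) = 2 * (‖fderiv ℂ g u‖ * N) by ring]
      linarith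
  -- the contraction T
  set T : EuclideanSpace ℂ (Fin n) → EuclideanSpace ℂ (Fin n) := fun z => Φ' (-(g z)) with hTdef
  have hgz' : ∀ z ∈ closedBall (0 : EuclideanSpace ℂ (Fin n)) ρ, ‖-(g z)‖ ≤ r / (2 * N) := by
    intro z hzz; rw [norm_neg]; exact hgbound z (hsubρR hzz)
  have hmaps : MapsTo T (closedBall (0 : EuclideanSpace ℂ (Fin n)) ρ)
      (closedBall (0 : EuclideanSpace ℂ (Fin n)) ρ) := by
    intro z hzz
    exact hΦ'ρ _ (hgz' z hzz)
  have hTf : ∀ z ∈ closedBall (0 : EuclideanSpace ℂ (Fin n)) ρ, f (T z) = -(g z) := by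
    intro z hzz; exact hΦ'2 _ (hgz' z hzz)
  have hTlip : ∀ x ∈ closedBall (0 : EuclideanSpace ℂ (Fin n)) ρ,
      ∀ y ∈ closedBall (0 : EuclideanSpace ℂ (Fin n)) ρ,
      ‖T x - T y‖ ≤ (3/5) * ‖x - y‖ := by
    intro x hx y hy
    have h1 : ‖Φ' (-(g x)) - Φ' (-(g y))‖ ≤ N' * ‖(-(g x)) - (-(g y))‖ :=
      hlip _ (mem_closedBall_zero_iff.mpr (hgz' x hx)) _ (mem_closedBall_zero_iff.mpr (hgz' y hy))
    have h2 : ‖(-(g x)) - (-(g y))‖ = ‖g x - g y‖ := by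
      rw [show (-(g x)) - (-(g y)) = g y - g x by abel, norm_sub_rev]
    calc ‖T x - T y‖ ≤ N' * ‖(-(g x)) - (-(g y))‖ := h1
      _ = N' * ‖g x - g y‖ := by rw [h2]
      _ ≤ N' * ((1 / (2 * N)) * ‖x - y‖) :=
          mul_le_mul_of_nonneg_left (hglip x hx y hy) hN'pos.le
      _ = (3/5) * ‖x - y‖ := by rw [hN'def]; field_simp; ring
  -- Banach fixed point
  have hKlt : (⟨3/5, by norm_num⟩ : NNReal) < 1 := by
    show (3/5 : ℝ) < 1; norm_num
  have hlipT : LipschitzOnWith (⟨3/5, by norm_num⟩ : NNReal) T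
      (closedBall (0 : EuclideanSpace ℂ (Fin n)) ρ) := by
    refine LipschitzOnWith.of_dist_le_mul ?_
    intro x hx y hy
    rw [dist_eq_norm, dist_eq_norm]
    exact hTlip x hx y hy
  have hcontr : ContractingWith (⟨3/5, by norm_num⟩ : NNReal)
      (hmaps.restrict T _ _) := ⟨hKlt, hlipT.mapsToRestrict hmaps⟩
  obtain ⟨z₀, hz₀mem, hz₀fix, -, -⟩ := ContractingWith.exists_fixedPoint'
    isClosed_closedBall.isComplete hmaps hcontr (mem_closedBall_self hρpos.le) (edist_ne_top _ _)
  have hz₀fix' : T z₀ = z₀ := hz₀fix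
  have hz₀eq : f z₀ + g z₀ = 0 := by
    have := hTf z₀ hz₀mem
    rw [hz₀fix'] at this
    rw [this]; abel
  refine ⟨z₀, ⟨?_, hz₀eq⟩, ?_⟩
  · rw [mem_ball_zero_iff]
    have := mem_closedBall_zero_iff.mp hz₀mem
    linarith
  · rintro z₁ ⟨hz₁ball, hz₁eq⟩
    rw [mem_ball_zero_iff] at hz₁ball
    have hz₁R : z₁ ∈ closedBall (0 : EuclideanSpace ℂ (Fin n)) R :=
      mem_closedBall_zero_iff.mpr (by linarith)
    have hfz₁ : f z₁ = -(g z₁) := by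
      have : f z₁ + g z₁ - g z₁ = -(g z₁) := by rw [hz₁eq]; abel
      rw [← this]; abel
    have hgz₁ : ‖-(g z₁)‖ ≤ r / (2 * N) := by rw [norm_neg]; exact hgbound z₁ hz₁R
    have hTz₁R : T z₁ ∈ closedBall (0 : EuclideanSpace ℂ (Fin n)) R :=
      hsubρR (hΦ'ρ _ hgz₁)
    have hTz₁ : T z₁ = z₁ := by
      apply hinj hTz₁R hz₁R
      rw [hΦ'2 _ hgz₁, hfz₁]
    have hz₁mem : z₁ ∈ closedBall (0 : EuclideanSpace ℂ (Fin n)) ρ := by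
      rw [← hTz₁]; exact hΦ'ρ _ hgz₁
    have hcon := hTlip z₁ hz₁mem z₀ hz₀mem
    rw [hTz₁, hz₀fix'] at hcon
    have hnn : 0 ≤ ‖z₁ - z₀‖ := norm_nonneg _
    have : ‖z₁ - z₀‖ = 0 := by linarith
    have := sub_eq_zero.mp (norm_eq_zero.mp this)
    exact this
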